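/- Let K be a symmetric continuous kernel on compact X that is conditionally positive definite w.r.t. F = span{f_1,...,f_k}, let P be an F-nondegenerate Borel probability measure on X with residual kernel K_P, and let μ be a finite signed Borel measure on X. Define a signed measure ν = (I−Π_P)*μ by ∫ f dν = ∫ (I−Π_P)f dμ for all continuous f. Then ∬ K_P(x,y) dμ(x)dμ(y) = ∬ K(x,y) dν(x)dν(y), and moreover ∫ f dν = 0 for all f ∈ F. -/

import Mathlib

open MeasureTheory

section Aux

set_option linter.unusedSectionVars false

variable {Y : Type*} [TopologicalSpace Y] [CompactSpace Y] [T2Space Y]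
  [SecondCountableTopology Y] [MeasurableSpace Y] [BorelSpace Y]

lemma aux_int (m : Measure Y) [IsFiniteMeasure m] {g : Y → ℝ} (hg : Continuous g) :
    Integrable g m :=
  hg.integrable_of_hasCompactSupport (HasCompactSupport.of_compactSpace g)

lemma aux_cont_int {Z : Type*} [TopologicalSpace Z] [CompactSpace Z]
    [FirstCountableTopology Z]
    (m : Measure Y) [IsFiniteMeasure m] {H : Z → Y → ℝ}
    (hH : Continuous fun p : Z × Y => H p.1 p.2) :
    Continuous fun x => ∫ y, H x y ∂m := by
  set Hb : BoundedContinuousFunction (Z × Y) ℝ := BoundedContinuousFunction.mkOfCompact ⟨_, hH⟩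
  apply continuous_of_dominated (bound := fun _ => ‖Hb‖)
  · exact fun x => ((hH.comp (Continuous.prodMk_right x)).aestronglyMeasurable)
  · intro x
    filter_upwards with y
    exact Hb.norm_coe_le_norm (x, y)
  · exact integrable_const _
  · filter_upwards with y
    exact hH.comp (continuous_id.prodMk continuous_const)

lemma aux_swap (m₁ m₂ : Measure Y) [IsFiniteMeasure m₁] [IsFiniteMeasure m₂]
    {H : Y → Y → ℝ} (hH : Continuous fun p : Y × Y => H p.1 p.2) :
    ∫ x, ∫ y, H x y ∂m₂ ∂m₁ = ∫ y, ∫ x, H x y ∂m₁ ∂m₂ :=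
  integral_integral_swap (aux_int (m₁.prod m₂) hH)

end Aux

/-- For the residual kernel `K_P` of a CPD kernel `K` w.r.t. an
`F`-nondegenerate `P`, and any finite signed Borel measure `μ` (encoded by a
Jordan decomposition `μ₁ - μ₂`), the measure `ν = (I−Π_P)*μ` (encoded `ν₁ - ν₂`,
characterized by `∫ f dν = ∫ (I−Π_P)f dμ` for all continuous `f`) satisfies
`∬ K_P dμ dμ = ∬ K dν dν`, and `∫ f dν = 0` for every `f ∈ F`. -/
theorem residual_kernel_quadratic_form_eq
    {d k : ℕ} {X : Set (EuclideanSpace ℝ (Fin d))} (hX : IsCompact X)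
    (f : Fin k → X → ℝ) (hfc : ∀ i, Continuous (f i)) (hli : LinearIndependent ℝ f)
    (K : X → X → ℝ) (hKsymm : ∀ x y, K x y = K y x)
    (hKcont : Continuous fun p : X × X => K p.1 p.2)
    (hCPD : ∀ (n : ℕ) (x : Fin n → X) (α : Fin n → ℝ),
        (∀ g ∈ Submodule.span ℝ (Set.range f), ∑ i, α i * g (x i) = 0) →
        0 ≤ ∑ i, ∑ j, α i * α j * K (x i) (x j))
    (P : Measure X) [IsProbabilityMeasure P]
    (G : Matrix (Fin k) (Fin k) ℝ)
    (hG : ∀ i j, G i j = ∫ x, f i x * f j x ∂P)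
    (hGinv : IsUnit G.det)
    (Pk : X → X → ℝ)
    (hPk : ∀ x y, Pk x y = ∑ i, ∑ j, G⁻¹ i j * f i x * f j y)
    (KP : X → X → ℝ)
    (hKP : ∀ x y, KP x y = K x y - (∫ s, Pk x s * K s y ∂P)
        - (∫ t, Pk y t * K x t ∂P)
        + ∫ s, ∫ t, Pk x s * K s t * Pk y t ∂P ∂P)
    -- the finite signed measure μ = μ₁ − μ₂ and its pushforward ν = (I−Π_P)*μ = ν₁ − ν₂
    (μ₁ μ₂ ν₁ ν₂ : Measure X) (hμ₁ : IsFiniteMeasure μ₁) (hμ₂ : IsFiniteMeasure μ₂)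
    (hν₁ : IsFiniteMeasure ν₁) (hν₂ : IsFiniteMeasure ν₂)
    (hν : ∀ g : X → ℝ, Continuous g →
      (∫ x, g x ∂ν₁) - (∫ x, g x ∂ν₂)
        = (∫ x, (g x - ∫ y, Pk x y * g y ∂P) ∂μ₁)
          - (∫ x, (g x - ∫ y, Pk x y * g y ∂P) ∂μ₂)) :
    ((∫ x, ∫ y, KP x y ∂μ₁ ∂μ₁) - (∫ x, ∫ y, KP x y ∂μ₂ ∂μ₁)
        - (∫ x, ∫ y, KP x y ∂μ₁ ∂μ₂) + (∫ x, ∫ y, KP x y ∂μ₂ ∂μ₂)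
      = (∫ x, ∫ y, K x y ∂ν₁ ∂ν₁) - (∫ x, ∫ y, K x y ∂ν₂ ∂ν₁)
        - (∫ x, ∫ y, K x y ∂ν₁ ∂ν₂) + (∫ x, ∫ y, K x y ∂ν₂ ∂ν₂))
    ∧ (∀ g ∈ Submodule.span ℝ (Set.range f),
        (∫ x, g x ∂ν₁) - (∫ x, g x ∂ν₂) = 0) := by
  haveI : CompactSpace X := isCompact_iff_compactSpace.mp hX
  -- joint continuity of Pk
  have hPkc : Continuous fun p : X × X => Pk p.1 p.2 := by
    have h : (fun p : X × X => Pk p.1 p.2)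
        = fun p : X × X => ∑ i, ∑ j, G⁻¹ i j * f i p.1 * f j p.2 :=
      funext fun p => hPk p.1 p.2
    rw [h]
    exact continuous_finset_sum _ fun i _ => continuous_finset_sum _ fun j _ =>
      (continuous_const.mul ((hfc i).comp continuous_fst)).mul ((hfc j).comp continuous_snd)
  have hPkcx : ∀ x : X, Continuous fun y => Pk x y :=
    fun x => hPkc.comp (Continuous.prodMk_right x)
  have hKx : ∀ x, Continuous fun y => K x y := fun x => hKcont.comp (Continuous.prodMk_right x)
  -- projection reproduces members of F
  have hprojf : ∀ i x, (∫ y, Pk x y * f i y ∂P) = f i x := by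
    intro i x
    have h1 : (fun y => Pk x y * f i y)
        = fun y => ∑ a, ∑ b, (G⁻¹ a b * f a x) * (f b y * f i y) := by
      funext y
      rw [hPk, Finset.sum_mul]
      refine Finset.sum_congr rfl fun a _ => ?_
      rw [Finset.sum_mul]
      exact Finset.sum_congr rfl fun b _ => by ring
    rw [h1, integral_finset_sum]
    · have h2 : ∀ a : Fin k,
          (∫ y, ∑ b, (G⁻¹ a b * f a x) * (f b y * f i y) ∂P)
            = ∑ b, (G⁻¹ a b * f a x) * (G b i) := by
        intro a
        rw [integral_finset_sum]
        · refine Finset.sum_congr rfl fun b _ => ?_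
          rw [integral_const_mul, hG]
        · exact fun b _ => (aux_int P (((hfc b).mul (hfc i)))).const_mul _
      simp_rw [h2]
      have hGG : G⁻¹ * G = 1 := Matrix.nonsing_inv_mul G hGinv
      have h3 : ∀ a : Fin k, ∑ b, (G⁻¹ a b * f a x) * G b i
          = (1 : Matrix (Fin k) (Fin k) ℝ) a i * f a x := by
        intro a
        rw [← hGG, Matrix.mul_apply, Finset.sum_mul]
        exact Finset.sum_congr rfl fun b _ => by ring
      simp_rw [h3, Matrix.one_apply]
      simp
    · intro a _
      refine aux_int P ?_
      exact continuous_finset_sum _ fun b _ => continuous_const.mul ((hfc b).mul (hfc i))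
  -- projection reproduces everything in the span
  have hspan : ∀ g ∈ Submodule.span ℝ (Set.range f),
      Continuous g ∧ ∀ x, (∫ y, Pk x y * g y ∂P) = g x := by
    intro g hg
    induction hg using Submodule.span_induction with
    | mem g hg =>
      obtain ⟨i, rfl⟩ := hg
      exact ⟨hfc i, hprojf i⟩
    | zero => exact ⟨continuous_const, fun x => by simp⟩
    | add a b ha hb iha ihb =>
      refine ⟨iha.1.add ihb.1, fun x => ?_⟩
      have : (fun y => Pk x y * (a + b) y)
          = fun y => Pk x y * a y + Pk x y * b y := by
        funext y; simp [mul_add]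
      rw [this, integral_add (f := fun y => Pk x y * a y) (g := fun y => Pk x y * b y) (aux_int P ((hPkcx x).mul iha.1))
        (aux_int P ((hPkcx x).mul ihb.1)), iha.2 x, ihb.2 x]
      simp
    | smul c a ha iha =>
      refine ⟨iha.1.const_smul c, fun x => ?_⟩
      have : (fun y => Pk x y * (c • a) y) = fun y => c * (Pk x y * a y) := by
        funext y; simp [smul_eq_mul]; ring
      rw [this, integral_const_mul, iha.2 x]
      simp [smul_eq_mul]
  -- Part 2
  have part2 : ∀ g ∈ Submodule.span ℝ (Set.range f),
      (∫ x, g x ∂ν₁) - (∫ x, g x ∂ν₂) = 0 := by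
    intro g hg
    obtain ⟨hgc, hgp⟩ := hspan g hg
    rw [hν g hgc]
    have : (fun x => g x - ∫ y, Pk x y * g y ∂P) = fun _ => (0 : ℝ) := by
      funext x; rw [hgp x]; ring
    rw [this]
    simp
  refine ⟨?_, part2⟩
  -- Part 1
  -- Tk = (I - Π_P) applied in the second variable of K
  set Tk : X → X → ℝ := fun x y => K x y - ∫ t, Pk y t * K x t ∂P with hTkdef
  have hTkc : Continuous fun p : X × X => Tk p.1 p.2 := by
    refine hKcont.sub ?_
    exact aux_cont_int P (H := fun p : X × X => fun t => Pk p.2 t * K p.1 t)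
      ((hPkc.comp ((continuous_snd.comp continuous_fst).prodMk continuous_snd)).mul
        (hKcont.comp ((continuous_fst.comp continuous_fst).prodMk continuous_snd)))
  have hTkx : ∀ x, Continuous fun y => Tk x y := fun x => hTkc.comp (Continuous.prodMk_right x)
  have hTky : ∀ y, Continuous fun x => Tk x y :=
    fun y => hTkc.comp (continuous_id.prodMk continuous_const)
  -- KP = (I - Π_P) applied in the first variable of Tk
  have step6 : ∀ x y, Tk x y - ∫ s, Pk x s * Tk s y ∂P = KP x y := by
    intro x y
    have e1 : (fun s => Pk x s * Tk s y)
        = fun s => Pk x s * K s y - Pk x s * (∫ t, Pk y t * K s t ∂P) := by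
      funext s; rw [hTkdef]; ring
    have e2 : ∫ s, Pk x s * Tk s y ∂P
        = (∫ s, Pk x s * K s y ∂P) - ∫ s, Pk x s * (∫ t, Pk y t * K s t ∂P) ∂P := by
      rw [e1]
      refine integral_sub (aux_int P ((hPkcx x).mul ?_)) (aux_int P ((hPkcx x).mul ?_))
      · exact hKcont.comp (continuous_id.prodMk continuous_const)
      · exact aux_cont_int P (H := fun s t => Pk y t * K s t)
          ((hPkc.comp (continuous_const.prodMk continuous_snd)).mul hKcont)
    have e3 : ∫ s, Pk x s * (∫ t, Pk y t * K s t ∂P) ∂P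
        = ∫ s, ∫ t, Pk x s * K s t * Pk y t ∂P ∂P := by
      have hpt : ∀ s : X, Pk x s * (∫ t, Pk y t * K s t ∂P)
          = ∫ t, Pk x s * K s t * Pk y t ∂P := by
        intro s
        rw [← integral_const_mul]
        refine integral_congr_ae (Filter.Eventually.of_forall fun t => ?_)
        show Pk x s * (Pk y t * K s t) = Pk x s * K s t * Pk y t
        ring
      exact integral_congr_ae (Filter.Eventually.of_forall fun s => hpt s)
    rw [e2, e3, hTkdef, hKP]
    ring
  have hST : Continuous fun p : X × X => ∫ s, Pk p.1 s * Tk s p.2 ∂P := by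
    exact aux_cont_int P (H := fun p : X × X => fun s => Pk p.1 s * Tk s p.2)
      ((hPkc.comp ((continuous_fst.comp continuous_fst).prodMk continuous_snd)).mul
        (hTkc.comp (continuous_snd.prodMk (continuous_snd.comp continuous_fst))))
  have hKPc : Continuous fun p : X × X => KP p.1 p.2 := by
    have h : (fun p : X × X => KP p.1 p.2)
        = fun p : X × X => Tk p.1 p.2 - ∫ s, Pk p.1 s * Tk s p.2 ∂P :=
      funext fun p => (step6 p.1 p.2).symm
    rw [h]
    exact hTkc.sub hST
  have hKPx : ∀ x, Continuous fun y => KP x y := fun x => hKPc.comp (Continuous.prodMk_right x)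
  -- F(x) = ∫ K(x,·) dν
  set F : X → ℝ := fun x => (∫ y, Tk x y ∂μ₁) - (∫ y, Tk x y ∂μ₂) with hFdef
  have hFrep : ∀ x, (∫ y, K x y ∂ν₁) - (∫ y, K x y ∂ν₂) = F x :=
    fun x => hν (fun y => K x y) (hKx x)
  have hFc : Continuous F := (aux_cont_int μ₁ hTkc).sub (aux_cont_int μ₂ hTkc)
  -- step 5: pointwise identity for (I-Π_P)F
  have step5 : ∀ x, F x - (∫ y, Pk x y * F y ∂P)
      = (∫ y, KP x y ∂μ₁) - (∫ y, KP x y ∂μ₂) := by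
    intro x
    have e1 : (fun s => Pk x s * F s)
        = fun s => (∫ y, Pk x s * Tk s y ∂μ₁) - (∫ y, Pk x s * Tk s y ∂μ₂) := by
      funext s
      rw [hFdef, integral_const_mul, integral_const_mul]
      ring
    have hint : ∀ (m : Measure X) [IsFiniteMeasure m],
        Integrable (fun s => ∫ y, Pk x s * Tk s y ∂m) P := by
      intro m _
      refine aux_int P (aux_cont_int m (H := fun s y => Pk x s * Tk s y) ?_)
      exact ((hPkc.comp (continuous_const.prodMk continuous_fst)).mul hTkc)
    have e2 : ∫ s, Pk x s * F s ∂P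
        = (∫ s, ∫ y, Pk x s * Tk s y ∂μ₁ ∂P) - ∫ s, ∫ y, Pk x s * Tk s y ∂μ₂ ∂P := by
      rw [e1]; exact integral_sub (hint μ₁) (hint μ₂)
    have hswap : ∀ (m : Measure X) [IsFiniteMeasure m],
        ∫ s, ∫ y, Pk x s * Tk s y ∂m ∂P = ∫ y, ∫ s, Pk x s * Tk s y ∂P ∂m := by
      intro m _
      exact aux_swap P m (H := fun s y => Pk x s * Tk s y)
        ((hPkc.comp (continuous_const.prodMk continuous_fst)).mul hTkc)
    have e4 : ∀ (m : Measure X) [IsFiniteMeasure m],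
        (∫ y, Tk x y ∂m) - (∫ y, ∫ s, Pk x s * Tk s y ∂P ∂m) = ∫ y, KP x y ∂m := by
      intro m _
      have hc : Continuous fun y : X => ∫ s, Pk x s * Tk s y ∂P :=
        hST.comp (Continuous.prodMk_right x)
      rw [← integral_sub (aux_int m (hTkx x)) (aux_int m hc)]
      exact integral_congr_ae (Filter.Eventually.of_forall fun y => step6 x y)
    rw [e2, hswap μ₁, hswap μ₂]
    have h4 := e4 μ₁
    have h5 := e4 μ₂
    simp only [hFdef]
    linarith
  -- assemble
  have hKPint : ∀ (m m' : Measure X) [IsFiniteMeasure m] [IsFiniteMeasure m'],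
      Integrable (fun x => ∫ y, KP x y ∂m) m' :=
    fun m m' _ _ => aux_int m' (aux_cont_int m hKPc)
  have hKint : ∀ (m m' : Measure X) [IsFiniteMeasure m] [IsFiniteMeasure m'],
      Integrable (fun x => ∫ y, K x y ∂m) m' :=
    fun m m' _ _ => aux_int m' (aux_cont_int m hKcont)
  have lhs_eq : (∫ x, ∫ y, KP x y ∂μ₁ ∂μ₁) - (∫ x, ∫ y, KP x y ∂μ₂ ∂μ₁)
        - (∫ x, ∫ y, KP x y ∂μ₁ ∂μ₂) + (∫ x, ∫ y, KP x y ∂μ₂ ∂μ₂)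
      = (∫ x, ((∫ y, KP x y ∂μ₁) - (∫ y, KP x y ∂μ₂)) ∂μ₁)
        - ∫ x, ((∫ y, KP x y ∂μ₁) - (∫ y, KP x y ∂μ₂)) ∂μ₂ := by
    rw [integral_sub (hKPint μ₁ μ₁) (hKPint μ₂ μ₁),
      integral_sub (hKPint μ₁ μ₂) (hKPint μ₂ μ₂)]
    ring
  have rhs_eq : (∫ x, ∫ y, K x y ∂ν₁ ∂ν₁) - (∫ x, ∫ y, K x y ∂ν₂ ∂ν₁)
        - (∫ x, ∫ y, K x y ∂ν₁ ∂ν₂) + (∫ x, ∫ y, K x y ∂ν₂ ∂ν₂)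
      = (∫ x, F x ∂ν₁) - ∫ x, F x ∂ν₂ := by
    have h1 : ∀ (m : Measure X) [IsFiniteMeasure m],
        ∫ x, F x ∂m = (∫ x, ∫ y, K x y ∂ν₁ ∂m) - ∫ x, ∫ y, K x y ∂ν₂ ∂m := by
      intro m _
      rw [← integral_sub (hKint ν₁ m) (hKint ν₂ m)]
      exact integral_congr_ae (Filter.Eventually.of_forall fun x => (hFrep x).symm)
    rw [h1 ν₁, h1 ν₂]
    ring
  rw [lhs_eq, rhs_eq, hν F hFc]
  have h2 : ∀ (m : Measure X) [IsFiniteMeasure m],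
      ∫ x, (F x - ∫ y, Pk x y * F y ∂P) ∂m
        = ∫ x, ((∫ y, KP x y ∂μ₁) - (∫ y, KP x y ∂μ₂)) ∂m := by
    intro m _
    exact integral_congr_ae (Filter.Eventually.of_forall fun x => step5 x)
  rw [h2 μ₁, h2 μ₂]
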